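/- If A is an invertible K×K diagonal matrix and Δ = A + B × P is invertible (B symmetric K×K, P = diag(p_1,...,p_K)), then the uniform-block matrix N = A ∘ I[p] + B ∘ J[p] is invertible with inverse N^{-1} = A^{-1} ∘ I[p] + (−Δ^{-1} × B × A^{-1}) ∘ J[p]. -/

import Mathlib

open Matrix BigOperators

/-- Block-diagonal expansion `A ∘ I[p]`: the `p × p` matrix `Bdiag(a₁ I_{p₁}, …, a_K I_{p_K})`,
indexed by the sigma type `Σ k, Fin (p k)`. -/
def blockI {K : ℕ} (p : Fin K → ℕ) (a : Fin K → ℝ) :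
    Matrix (Σ k, Fin (p k)) (Σ k, Fin (p k)) ℝ :=
  Matrix.diagonal (fun i => a i.1)

/-- Block all-ones expansion `B ∘ J[p]`: the `p × p` matrix whose `(k,k')` block is
`B k k' • 1_{p_k × p_{k'}}`. -/
def blockJ {K : ℕ} (p : Fin K → ℕ) (B : Matrix (Fin K) (Fin K) ℝ) :
    Matrix (Σ k, Fin (p k)) (Σ k, Fin (p k)) ℝ :=
  fun i j => B i.1 j.1

/-- `P = diag(p₁, …, p_K)`. -/
def Pmat {K : ℕ} (p : Fin K → ℕ) : Matrix (Fin K) (Fin K) ℝ :=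
  Matrix.diagonal (fun k => (p k : ℝ))

lemma blockJ_add {K : ℕ} (p : Fin K → ℕ) (X Y : Matrix (Fin K) (Fin K) ℝ) :
    blockJ p (X + Y) = blockJ p X + blockJ p Y := rfl

lemma blockI_mul_blockJ {K : ℕ} (p : Fin K → ℕ) (a : Fin K → ℝ)
    (M : Matrix (Fin K) (Fin K) ℝ) :
    blockI p a * blockJ p M = blockJ p (Matrix.diagonal a * M) := by
  ext i j
  simp [blockI, blockJ, Matrix.diagonal_mul, Matrix.mul_apply, Matrix.diagonal_apply,
    Finset.sum_ite_eq]

lemma blockJ_mul_blockI {K : ℕ} (p : Fin K → ℕ) (a : Fin K → ℝ)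
    (M : Matrix (Fin K) (Fin K) ℝ) :
    blockJ p M * blockI p a = blockJ p (M * Matrix.diagonal a) := by
  ext i j
  simp [blockI, blockJ, Matrix.mul_diagonal, Matrix.mul_apply, Matrix.diagonal_apply,
    Finset.sum_ite_eq]

lemma blockJ_mul_blockJ {K : ℕ} (p : Fin K → ℕ)
    (M N : Matrix (Fin K) (Fin K) ℝ) :
    blockJ p M * blockJ p N = blockJ p (M * Pmat p * N) := by
  ext i j
  simp only [blockJ, Pmat, Matrix.mul_apply, Matrix.mul_diagonal]
  rw [← Finset.univ_sigma_univ, Finset.sum_sigma]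
  simp [Matrix.diagonal_apply, Finset.sum_ite_eq, Finset.sum_const, mul_comm, mul_assoc, mul_left_comm]

lemma blockI_mul_blockI {K : ℕ} (p : Fin K → ℕ) (a b : Fin K → ℝ) :
    blockI p a * blockI p b = blockI p (fun k => a k * b k) := by
  simp [blockI, Matrix.diagonal_mul_diagonal]

lemma blockI_eq_diagonal {K : ℕ} (p : Fin K → ℕ) (a : Fin K → ℝ) :
    blockI p a = Matrix.diagonal (fun i : Σ k, Fin (p k) => a i.1) := rfl

/-- Inverse of a uniform-block matrix: if `A` and `Δ = A + B P` are invertible then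
`N = A ∘ I[p] + B ∘ J[p]` is invertible with
`N⁻¹ = A⁻¹ ∘ I[p] + (−Δ⁻¹ B A⁻¹) ∘ J[p]`. -/
theorem blockHadamard_inv {K : ℕ} (p : Fin K → ℕ)
    (a : Fin K → ℝ) (B : Matrix (Fin K) (Fin K) ℝ) (hB : B.IsSymm)
    (hA : IsUnit (Matrix.diagonal a))
    (hΔ : IsUnit (Matrix.diagonal a + B * Pmat p)) :
    IsUnit (blockI p a + blockJ p B) ∧
    (blockI p a + blockJ p B)⁻¹ =
      blockI p (fun k => (a k)⁻¹) +
        blockJ p (-((Matrix.diagonal a + B * Pmat p)⁻¹ * B * (Matrix.diagonal a)⁻¹)) := by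
  set D := Matrix.diagonal a with hD
  set Δ := D + B * Pmat p with hΔdef
  set C := -(Δ⁻¹ * B * D⁻¹) with hC
  have hdet : IsUnit Δ.det := (Matrix.isUnit_iff_isUnit_det _).mp hΔ
  -- each a k is a unit
  have ha : ∀ k, a k ≠ 0 := by
    intro k hk
    have hdetA : IsUnit D.det := (Matrix.isUnit_iff_isUnit_det _).mp hA
    rw [hD, Matrix.det_diagonal] at hdetA
    have : (∏ i, a i) ≠ 0 := hdetA.ne_zero
    exact this (Finset.prod_eq_zero (Finset.mem_univ k) hk)
  have hDinv : D⁻¹ = Matrix.diagonal (fun k => (a k)⁻¹) := by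
    apply Matrix.inv_eq_right_inv
    rw [hD, Matrix.diagonal_mul_diagonal]
    have : (fun k => a k * (a k)⁻¹) = fun _ => (1:ℝ) :=
      funext fun k => mul_inv_cancel₀ (ha k)
    rw [this, Matrix.diagonal_one]

  have hΔC : Δ * C = -(B * D⁻¹) := by
    rw [hC, mul_neg]
    rw [Matrix.mul_assoc]
    rw [← Matrix.mul_assoc, Matrix.mul_nonsing_inv _ hdet, Matrix.one_mul]
  have key : D * C + B * D⁻¹ + B * Pmat p * C = 0 := by
    have h1 : D * C + B * Pmat p * C = -(B * D⁻¹) := by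
      rw [← Matrix.add_mul, ← hΔdef, hΔC]
    rw [add_right_comm, h1, neg_add_cancel]
  have hmul : (blockI p a + blockJ p B) *
      (blockI p (fun k => (a k)⁻¹) + blockJ p C) = 1 := by
    rw [Matrix.add_mul, Matrix.mul_add, Matrix.mul_add,
      blockI_mul_blockI, blockI_mul_blockJ, blockJ_mul_blockI, blockJ_mul_blockJ]
    have h2 : blockI p (fun k => a k * (a k)⁻¹) = 1 := by
      rw [blockI_eq_diagonal]
      have : (fun i : Σ k, Fin (p k) => a i.1 * (a i.1)⁻¹) = fun _ => (1:ℝ) := by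
        funext i; exact mul_inv_cancel₀ (ha i.1)
      rw [this, Matrix.diagonal_one]
    rw [h2, ← hD, ← hDinv]
    have h3 : blockJ p (D * C) + (blockJ p (B * D⁻¹) + blockJ p (B * Pmat p * C)) =
        blockJ p (D * C + B * D⁻¹ + B * Pmat p * C) := by
      rw [blockJ_add, blockJ_add, add_assoc]
    rw [add_assoc, h3, key]
    have h4 : blockJ p (0 : Matrix (Fin K) (Fin K) ℝ) = 0 := rfl
    rw [h4, add_zero]
  have hC' : -(Δ⁻¹ * B * D⁻¹) = C := rfl
  constructor
  · refine (Matrix.isUnit_iff_isUnit_det _).mpr (IsUnit.of_mul_eq_one ((blockI p (fun k => (a k)⁻¹) + blockJ p C).det) ?_)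
    rw [← Matrix.det_mul, hmul, Matrix.det_one]
  · rw [Matrix.inv_eq_right_inv hmul]
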